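/- There exists a semilattice operation s on D = {0,1,2} (binary, idempotent, commutative, associative) and a relation R ⊆ D² preserved by s such that the second coordinate of R is uniquely determined by the first, yet the second coordinate cannot be expressed as any composition built from s applied to the first coordinate. Concretely: let s(x,x)=x and s(x,y)=0 for x≠y, and R = {(0,0),(1,1),(2,0)}; then s preserves R, the second coordinate of R is a function of the first, but there is no term function t in the clone generated by s with t(a) = b for all (a,b) ∈ R (indeed every unary term function of this clone is the identity). -/
import Mathlib


/-- Unary terms in the clone generated by a single binary operation. -/
inductive UnaryTerm : Type
  | var : UnaryTerm
  | node : UnaryTerm → UnaryTerm → UnaryTerm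

/-- Evaluation of a unary term over a binary operation `s`. -/
def UnaryTerm.eval {D : Type*} (s : D → D → D) : UnaryTerm → D → D
  | .var, x => x
  | .node a b, x => s (a.eval s x) (b.eval s x)

/-- There is a semilattice operation `s` on `{0,1,2}` and an `s`-invariant
binary relation whose second coordinate is a function of the first, yet no
unary term function of the clone generated by `s` realises this function:
every unary term function of this clone is the identity. -/
theorem stmt_5 :
    ∃ s : Fin 3 → Fin 3 → Fin 3,
      (∀ x, s x x = x) ∧ (∀ x y, s x y = s y x) ∧
      (∀ x y z, s (s x y) z = s x (s y z)) ∧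
      (∀ x y, x ≠ y → s x y = 0) ∧
      ∃ R : Set (Fin 3 × Fin 3),
        R = {(0, 0), (1, 1), (2, 0)} ∧
        (∀ a ∈ R, ∀ b ∈ R, (s a.1 b.1, s a.2 b.2) ∈ R) ∧
        (∃ h : Fin 3 → Fin 3, ∀ t ∈ R, h t.1 = t.2) ∧
        (¬ ∃ T : UnaryTerm, ∀ t ∈ R, T.eval s t.1 = t.2) ∧
        (∀ (T : UnaryTerm) (x : Fin 3), T.eval s x = x) := by
  refine ⟨fun x y => if x = y then x else 0, fun x => by simp, ?_, ?_, ?_, ?_⟩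
  · intro x y; fin_cases x <;> fin_cases y <;> decide
  · intro x y z; fin_cases x <;> fin_cases y <;> fin_cases z <;> decide
  · intro x y h; simp [h]
  · have hid : ∀ (T : UnaryTerm) (x : Fin 3),
        T.eval (fun x y => if x = y then x else 0) x = x := by
      intro T
      induction T with
      | var => intro x; rfl
      | node a b iha ihb => intro x; simp [UnaryTerm.eval, iha, ihb]
    refine ⟨{(0, 0), (1, 1), (2, 0)}, rfl, ?_, ⟨fun x => if x = 1 then 1 else 0, ?_⟩, ?_, hid⟩
    · intro a ha b hb
      simp only [Set.mem_insert_iff, Set.mem_singleton_iff] at ha hb ⊢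
      rcases ha with h | h | h <;> rcases hb with h' | h' | h' <;> subst h <;> subst h' <;> decide
    · intro t ht
      simp only [Set.mem_insert_iff, Set.mem_singleton_iff] at ht
      rcases ht with h | h | h <;> subst h <;> decide
    · rintro ⟨T, hT⟩
      have := hT (2, 0) (by simp)
      rw [hid] at this
      exact absurd this (by decide)
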